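/- Let Ω ⊂ ℝⁿ be a bounded domain, ∅ ≠ ω ⊆ Ω open, X^δ a finite-dimensional subspace of L₂(Ω), Y^δ a finite-dimensional Hilbert space, B^δ ∈ L(L₂(Ω), (Y^δ)'), and 0 ≤ ε ≤ 1. Assume that |||z|||_{ε,δ} := (‖B^δ z‖²_{(Y^δ)'} + ‖Cz‖²_{L₂(ω)} + ε² ‖z‖²_{L₂(Ω)})^{1/2} is a norm on X^δ (i.e. z ∈ X^δ with B^δ z = 0, z|_ω = 0 and εz = 0 implies z = 0). Define M^δ : X^δ × Y^δ → (X^δ × Y^δ)' by M^δ(u,v)(z̃,ṽ) := ⟨v, ṽ⟩_{Y^δ} + (B^δ u)(ṽ) + (B^δ z̃)(v) − ⟨Cu, Cz̃⟩_{L₂(ω)} − ε² ⟨u, z̃⟩_{L₂(Ω)}. Then M^δ is invertible and |||u|||_{ε,δ} + ‖v‖_{Y^δ} ≂ ‖M^δ(u,v)‖_{((X^δ, |||·|||_{ε,δ}) × Y^δ)'}, with equivalence constants independent of δ, ε, X^δ, Y^δ and B^δ. -/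

import Mathlib

open MeasureTheory

noncomputable section

/-- `n`-dimensional Euclidean space. -/
abbrev Eu (n : ℕ) : Type := EuclideanSpace ℝ (Fin n)

/-- A smooth compactly supported test function with support contained in `Ω`. -/
def IsTestFun {n : ℕ} (Ω : Set (Eu n)) (φ : Eu n → ℝ) : Prop :=
  ContDiff ℝ (⊤ : ℕ∞) φ ∧ HasCompactSupport φ ∧ tsupport φ ⊆ Ω

/-- The pointwise Laplacian, expressed via the second iterated Fréchet derivative. -/
def lap {n : ℕ} (f : Eu n → ℝ) (x : Eu n) : ℝ :=
  ∑ i : Fin n,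
    iteratedFDeriv ℝ 2 f x ![EuclideanSpace.single i 1, EuclideanSpace.single i 1]

/-- The `L₂` norm of `f` on the set `S`. -/
def L2 {n : ℕ} (f : Eu n → ℝ) (S : Set (Eu n)) : ℝ :=
  Real.sqrt (∫ x in S, (f x) ^ 2)

/-- The (full) `H²` norm of `f` on the set `S`. -/
def H2norm {n : ℕ} (f : Eu n → ℝ) (S : Set (Eu n)) : ℝ :=
  Real.sqrt (∫ x in S, ((f x) ^ 2 + ‖fderiv ℝ f x‖ ^ 2 + ‖iteratedFDeriv ℝ 2 f x‖ ^ 2))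

/-- `H²₀(Ω)`: the closure of the test functions in the `H²(Ω)`-norm. -/
def H20 {n : ℕ} (Ω : Set (Eu n)) : Set (Eu n → ℝ) :=
  {v | ∀ ε > 0, ∃ φ, IsTestFun Ω φ ∧ H2norm (fun x => v x - φ x) Ω < ε}

/-- The ultra-weak Laplace operator: `(B z)(v) = -∫_Ω z Δv dx`. -/
def Bop {n : ℕ} (Ω : Set (Eu n)) (z v : Eu n → ℝ) : ℝ :=
  -∫ x in Ω, z x * lap v x

/-- The `H⁻²(Ω) = (H²₀(Ω))'` dual norm of a functional `F`. -/
def Hm2norm {n : ℕ} (Ω : Set (Eu n)) (F : (Eu n → ℝ) → ℝ) : ℝ :=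
  sSup {r | ∃ v ∈ H20 Ω, H2norm v Ω ≠ 0 ∧ r = F v / H2norm v Ω}

/-- `‖Bz‖_{H⁻²(Ω)}`. -/
def Bnorm {n : ℕ} (Ω : Set (Eu n)) (z : Eu n → ℝ) : ℝ := Hm2norm Ω (Bop Ω z)

/-- `‖Az‖_{H⁻²(Ω) × L₂(ω)}` for `A = (B, C)`, `Cz = z|_ω`. -/
def Anorm {n : ℕ} (Ω ω : Set (Eu n)) (z : Eu n → ℝ) : ℝ :=
  Real.sqrt (Bnorm Ω z ^ 2 + L2 z ω ^ 2)

/-- `w` is harmonic on `Ω` in the distributional sense. -/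
def IsHarmonicOn {n : ℕ} (Ω : Set (Eu n)) (w : Eu n → ℝ) : Prop :=
  ∀ φ, IsTestFun Ω φ → ∫ x in Ω, w x * lap φ x = 0

/-- A bounded domain: open, connected and bounded. -/
def IsBddDomain {n : ℕ} (Ω : Set (Eu n)) : Prop :=
  IsOpen Ω ∧ IsConnected Ω ∧ Bornology.IsBounded Ω

/-- Membership in `H⁻²(Ω)`: a functional which is linear and bounded on `H²₀(Ω)`. -/
def MemHm2 {n : ℕ} (Ω : Set (Eu n)) (F : (Eu n → ℝ) → ℝ) : Prop :=
  (∀ v ∈ H20 Ω, ∀ w ∈ H20 Ω, F (fun x => v x + w x) = F v + F w) ∧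
  (∀ c : ℝ, ∀ v ∈ H20 Ω, F (fun x => c * v x) = c * F v) ∧
  (∃ M : ℝ, ∀ v ∈ H20 Ω, |F v| ≤ M * H2norm v Ω)

/-- data error `ℰ_data = ‖Au - (ℓ,q)‖_{H⁻²(Ω) × L₂(ω)}`. -/
def EdataN {n : ℕ} (Ω ω : Set (Eu n)) (u : Eu n → ℝ) (ℓ : (Eu n → ℝ) → ℝ)
    (q : Eu n → ℝ) : ℝ :=
  Real.sqrt (Hm2norm Ω (fun v => Bop Ω u v - ℓ v) ^ 2 + L2 (fun x => u x - q x) ω ^ 2)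

/-- best approximation error `ℰ_appr = min_{z ∈ X} ‖u - z‖_{L₂(Ω)}`. -/
def EapprN {n : ℕ} (Ω : Set (Eu n)) (X : Submodule ℝ (Eu n → ℝ)) (u : Eu n → ℝ) : ℝ :=
  sInf {r | ∃ z ∈ X, r = L2 (fun x => u x - z x) Ω}


lemma myMulInt {α : Type*} [MeasurableSpace α] {μ : Measure α} {f g : α → ℝ}
    (hf : MemLp f 2 μ) (hg : MemLp g 2 μ) : Integrable (fun x => f x * g x) μ := by
  have hint : Integrable (fun x => (f x ^ 2 + g x ^ 2) / 2) μ :=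
    (hf.integrable_sq.add hg.integrable_sq).div_const 2
  refine Integrable.mono' hint
    (hf.aestronglyMeasurable.mul hg.aestronglyMeasurable) (Filter.Eventually.of_forall fun x => ?_)
  rw [Real.norm_eq_abs, abs_mul]
  nlinarith [sq_nonneg (|f x| - |g x|), sq_abs (f x), sq_abs (g x), abs_nonneg (f x), abs_nonneg (g x)]

lemma myCS {α : Type*} [MeasurableSpace α] {μ : Measure α} {f g : α → ℝ}
    (hf : MemLp f 2 μ) (hg : MemLp g 2 μ) :
    |∫ x, f x * g x ∂μ| ≤ Real.sqrt (∫ x, f x ^ 2 ∂μ) * Real.sqrt (∫ x, g x ^ 2 ∂μ) := by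
  set A := ∫ x, f x ^ 2 ∂μ with hA
  set B := ∫ x, g x ^ 2 ∂μ with hB
  set I := ∫ x, f x * g x ∂μ with hI
  have hA0 : 0 ≤ A := integral_nonneg fun x => sq_nonneg _
  have hB0 : 0 ≤ B := integral_nonneg fun x => sq_nonneg _
  have key : ∀ t : ℝ, 0 ≤ A * (t * t) + (2 * I) * t + B := by
    intro t
    have h1 : 0 ≤ ∫ x, (t * f x + g x) ^ 2 ∂μ := integral_nonneg fun x => sq_nonneg _
    have i1 : Integrable (fun x => (t * t) * f x ^ 2) μ := hf.integrable_sq.const_mul _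
    have i2 : Integrable (fun x => (2 * t) * (f x * g x)) μ := (myMulInt hf hg).const_mul _
    have i3 : Integrable (fun x => (2 * t) * (f x * g x) + g x ^ 2) μ := i2.add hg.integrable_sq
    have h2 : ∫ x, (t * f x + g x) ^ 2 ∂μ = A * (t * t) + (2 * I) * t + B := by
      have e : ∀ x, (t * f x + g x) ^ 2
          = (t * t) * f x ^ 2 + ((2 * t) * (f x * g x) + g x ^ 2) := fun x => by ring
      simp_rw [e]
      rw [integral_add i1 i3, integral_add i2 hg.integrable_sq,
        integral_const_mul, integral_const_mul]
      ring
    linarith [h2 ▸ h1]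
  have hd := discrim_le_zero key
  rw [discrim] at hd
  have hsq : I ^ 2 ≤ A * B := by nlinarith
  calc |I| = Real.sqrt (I ^ 2) := (Real.sqrt_sq_eq_abs I).symm
    _ ≤ Real.sqrt (A * B) := Real.sqrt_le_sqrt hsq
    _ = Real.sqrt A * Real.sqrt B := Real.sqrt_mul hA0 B
section Arith
lemma arith_core (a β m s Np : ℝ) (ha : 0 ≤ a) (hβ0 : 0 ≤ β) (hm : 0 ≤ m) (hs0 : 0 ≤ s)
    (hNp0 : 0 ≤ Np) (hNle : Np ≤ a + β + m) (hmN : m ≤ Np) (hβN : β ≤ Np)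
    (h1 : Np ≠ 0 → (m ^ 2 + β ^ 2) / Np ≤ s) (h2 : a - m ≤ s) :
    (1 / 25) * (a + β + m) ≤ s := by
  rcases le_or_gt (a + β) (4 * m) with hc | hc
  · rcases eq_or_lt_of_le hm with hm0 | hm0
    · have ha0 : a = 0 := by linarith
      have hβ0' : β = 0 := by linarith
      rw [← hm0, ha0, hβ0']; linarith
    · have hNpos : 0 < Np := lt_of_lt_of_le hm0 hmN
      have hs1 := h1 (ne_of_gt hNpos)
      have hfrac : m ^ 2 / (5 * m) ≤ (m ^ 2 + β ^ 2) / Np :=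
        div_le_div₀ (by positivity) (by nlinarith) hNpos (by linarith)
      have heq : m ^ 2 / (5 * m) = m / 5 := by
        field_simp
      rw [heq] at hfrac
      linarith
  · rcases le_or_gt β a with hd | hd
    · linarith
    · have hβpos : 0 < β := lt_of_le_of_lt ha hd
      have hNpos : 0 < Np := lt_of_lt_of_le hβpos hβN
      have hs1 := h1 (ne_of_gt hNpos)
      have hσpos : 0 < a + β + m := by linarith
      have hfrac : β ^ 2 / (a + β + m) ≤ (m ^ 2 + β ^ 2) / Np :=
        div_le_div₀ (by positivity) (by nlinarith) hNpos hNle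
      have hσle : a + β + m ≤ 5 / 2 * β := by linarith
      have hkey : (1 / 25) * (a + β + m) ≤ β ^ 2 / (a + β + m) := by
        rw [le_div_iff₀ hσpos]
        nlinarith [mul_le_mul hσle hσle (by linarith) (by positivity)]
      linarith

/-- pure arithmetic for the lower bound -/
lemma arith_lower (a bw bO m s : ℝ) (ha : 0 ≤ a) (hbw : 0 ≤ bw) (hbO : 0 ≤ bO)
    (hm : 0 ≤ m) (hs0 : 0 ≤ s)
    (h1 : Real.sqrt (a ^ 2 + bw ^ 2 + bO ^ 2 + m ^ 2) ≠ 0 →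
      (m ^ 2 + bw ^ 2 + bO ^ 2) / Real.sqrt (a ^ 2 + bw ^ 2 + bO ^ 2 + m ^ 2) ≤ s)
    (h2 : a - m ≤ s) :
    (1 / 25) * (Real.sqrt (a ^ 2 + bw ^ 2 + bO ^ 2) + m) ≤ s := by
  have hB0 : (0:ℝ) ≤ bw ^ 2 + bO ^ 2 := by positivity
  have hβ0 : 0 ≤ Real.sqrt (bw ^ 2 + bO ^ 2) := Real.sqrt_nonneg _
  have hβsq : Real.sqrt (bw ^ 2 + bO ^ 2) ^ 2 = bw ^ 2 + bO ^ 2 := Real.sq_sqrt hB0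
  have hNp0 : 0 ≤ Real.sqrt (a ^ 2 + bw ^ 2 + bO ^ 2 + m ^ 2) := Real.sqrt_nonneg _
  have hNle : Real.sqrt (a ^ 2 + bw ^ 2 + bO ^ 2 + m ^ 2)
      ≤ a + Real.sqrt (bw ^ 2 + bO ^ 2) + m := by
    calc Real.sqrt (a ^ 2 + bw ^ 2 + bO ^ 2 + m ^ 2)
        ≤ Real.sqrt ((a + Real.sqrt (bw ^ 2 + bO ^ 2) + m) ^ 2) := by
          apply Real.sqrt_le_sqrt; nlinarith [mul_nonneg ha hβ0, mul_nonneg hβ0 hm,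
            mul_nonneg ha hm]
      _ = a + Real.sqrt (bw ^ 2 + bO ^ 2) + m := Real.sqrt_sq (by positivity)
  have hmN : m ≤ Real.sqrt (a ^ 2 + bw ^ 2 + bO ^ 2 + m ^ 2) := by
    calc m = Real.sqrt (m ^ 2) := (Real.sqrt_sq hm).symm
      _ ≤ _ := by apply Real.sqrt_le_sqrt; nlinarith
  have hβN : Real.sqrt (bw ^ 2 + bO ^ 2) ≤ Real.sqrt (a ^ 2 + bw ^ 2 + bO ^ 2 + m ^ 2) := by
    apply Real.sqrt_le_sqrt; nlinarith
  have h1' : Real.sqrt (a ^ 2 + bw ^ 2 + bO ^ 2 + m ^ 2) ≠ 0 →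
      (m ^ 2 + Real.sqrt (bw ^ 2 + bO ^ 2) ^ 2) / Real.sqrt (a ^ 2 + bw ^ 2 + bO ^ 2 + m ^ 2)
        ≤ s := by
    rw [show m ^ 2 + Real.sqrt (bw ^ 2 + bO ^ 2) ^ 2 = m ^ 2 + bw ^ 2 + bO ^ 2 by
      rw [hβsq]; ring]
    exact h1
  have core := arith_core a (Real.sqrt (bw ^ 2 + bO ^ 2)) m s
    (Real.sqrt (a ^ 2 + bw ^ 2 + bO ^ 2 + m ^ 2)) ha hβ0 hm hs0 hNp0 hNle hmN hβN h1' h2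
  have hT : Real.sqrt (a ^ 2 + bw ^ 2 + bO ^ 2) ≤ a + Real.sqrt (bw ^ 2 + bO ^ 2) := by
    calc Real.sqrt (a ^ 2 + bw ^ 2 + bO ^ 2)
        ≤ Real.sqrt ((a + Real.sqrt (bw ^ 2 + bO ^ 2)) ^ 2) := by
          apply Real.sqrt_le_sqrt; nlinarith [mul_nonneg ha hβ0]
      _ = _ := Real.sqrt_sq (by positivity)
  linarith
end Arith
open MeasureTheory

def auxM {n : ℕ} (Ω ω : Set (Eu n)) (X : Submodule ℝ (Eu n → ℝ)) (Y : Type)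
    [NormedAddCommGroup Y] [InnerProductSpace ℝ Y]
    (Bd : (Eu n → ℝ) →ₗ[ℝ] (Y →L[ℝ] ℝ)) (ε : ℝ) (p q : X × Y) : ℝ :=
  (inner ℝ p.2 q.2 : ℝ) + Bd p.1 q.2 + Bd q.1 p.2
    - (∫ x in ω, (p.1 : Eu n → ℝ) x * (q.1 : Eu n → ℝ) x)
    - ε ^ 2 * ∫ x in Ω, (p.1 : Eu n → ℝ) x * (q.1 : Eu n → ℝ) x

def auxT {n : ℕ} (Ω ω : Set (Eu n)) (X : Submodule ℝ (Eu n → ℝ)) (Y : Type)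
    [NormedAddCommGroup Y] [InnerProductSpace ℝ Y]
    (Bd : (Eu n → ℝ) →ₗ[ℝ] (Y →L[ℝ] ℝ)) (ε : ℝ) (z : X) : ℝ :=
  ‖Bd (z : Eu n → ℝ)‖ ^ 2 + L2 (z : Eu n → ℝ) ω ^ 2 + ε ^ 2 * L2 (z : Eu n → ℝ) Ω ^ 2

def auxN {n : ℕ} (Ω ω : Set (Eu n)) (X : Submodule ℝ (Eu n → ℝ)) (Y : Type)
    [NormedAddCommGroup Y] [InnerProductSpace ℝ Y]
    (Bd : (Eu n → ℝ) →ₗ[ℝ] (Y →L[ℝ] ℝ)) (ε : ℝ) (q : X × Y) : ℝ :=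
  Real.sqrt (auxT Ω ω X Y Bd ε q.1 + ‖q.2‖ ^ 2)

def auxS {n : ℕ} (Ω ω : Set (Eu n)) (X : Submodule ℝ (Eu n → ℝ)) (Y : Type)
    [NormedAddCommGroup Y] [InnerProductSpace ℝ Y]
    (Bd : (Eu n → ℝ) →ₗ[ℝ] (Y →L[ℝ] ℝ)) (ε : ℝ) (p : X × Y) : Set ℝ :=
  {r : ℝ | ∃ q : X × Y, auxN Ω ω X Y Bd ε q ≠ 0 ∧
      r = auxM Ω ω X Y Bd ε p q / auxN Ω ω X Y Bd ε q}

lemma L2_sq {n : ℕ} (f : Eu n → ℝ) (S : Set (Eu n)) : L2 f S ^ 2 = ∫ x in S, (f x) ^ 2 :=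
  Real.sq_sqrt (integral_nonneg fun _ => sq_nonneg _)
lemma L2_nonneg {n : ℕ} (f : Eu n → ℝ) (S : Set (Eu n)) : 0 ≤ L2 f S := Real.sqrt_nonneg _
lemma L2_neg {n : ℕ} (f : Eu n → ℝ) (S : Set (Eu n)) : L2 (-f) S = L2 f S := by simp [L2]
lemma L2_zero {n : ℕ} (S : Set (Eu n)) : L2 (0 : Eu n → ℝ) S = 0 := by simp [L2]

section Facts
variable {n : ℕ} (Ω ω : Set (Eu n)) (X : Submodule ℝ (Eu n → ℝ)) (Y : Type)
  [NormedAddCommGroup Y] [InnerProductSpace ℝ Y]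
  (Bd : (Eu n → ℝ) →ₗ[ℝ] (Y →L[ℝ] ℝ)) (ε : ℝ)

lemma auxT_neg (z : X) : auxT Ω ω X Y Bd ε (-z) = auxT Ω ω X Y Bd ε z := by
  have hc : ((-z : X) : Eu n → ℝ) = -(z : Eu n → ℝ) := rfl
  rw [auxT, auxT, hc, L2_neg, L2_neg, map_neg, norm_neg]

lemma auxT_zero : auxT Ω ω X Y Bd ε 0 = 0 := by
  have hc : ((0 : X) : Eu n → ℝ) = 0 := rfl
  rw [auxT, hc, L2_zero, L2_zero, map_zero]; simp

lemma auxN_nonneg (q : X × Y) : 0 ≤ auxN Ω ω X Y Bd ε q := Real.sqrt_nonneg _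

lemma auxN_neg (q : X × Y) : auxN Ω ω X Y Bd ε (-q) = auxN Ω ω X Y Bd ε q := by
  rw [auxN, auxN]
  have h1 : (-q).1 = -q.1 := rfl
  have h2 : (-q).2 = -q.2 := rfl
  rw [h1, h2, auxT_neg, norm_neg]

lemma auxM_neg_right (p q : X × Y) :
    auxM Ω ω X Y Bd ε p (-q) = -auxM Ω ω X Y Bd ε p q := by
  have h1 : ((-q).1 : Eu n → ℝ) = -(q.1 : Eu n → ℝ) := rfl
  have h2 : (-q).2 = -q.2 := rfl
  rw [auxM, auxM, h1, h2, inner_neg_right, map_neg, map_neg,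
    ContinuousLinearMap.neg_apply]
  simp only [Pi.neg_apply, mul_neg, integral_neg]
  ring

lemma auxM_comm (p q : X × Y) : auxM Ω ω X Y Bd ε p q = auxM Ω ω X Y Bd ε q p := by
  rw [auxM, auxM, real_inner_comm]
  have h : ∀ S : Set (Eu n), (∫ x in S, (p.1 : Eu n → ℝ) x * (q.1 : Eu n → ℝ) x)
      = ∫ x in S, (q.1 : Eu n → ℝ) x * (p.1 : Eu n → ℝ) x := fun S => by
    simp_rw [mul_comm]
  rw [h, h]; ring

lemma auxM_E1 (p : X × Y) :
    auxM Ω ω X Y Bd ε p (-p.1, p.2)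
      = ‖p.2‖ ^ 2 + L2 (p.1 : Eu n → ℝ) ω ^ 2 + ε ^ 2 * L2 (p.1 : Eu n → ℝ) Ω ^ 2 := by
  have h1 : (((-p.1 : X)) : Eu n → ℝ) = -(p.1 : Eu n → ℝ) := rfl
  rw [auxM]
  simp only [h1, map_neg, ContinuousLinearMap.neg_apply, Pi.neg_apply, mul_neg,
    integral_neg, real_inner_self_eq_norm_sq]
  rw [L2_sq, L2_sq]
  simp_rw [← pow_two]
  ring
end Facts
section FactsB
variable {n : ℕ} (Ω ω : Set (Eu n)) (X : Submodule ℝ (Eu n → ℝ)) (Y : Type)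
  [NormedAddCommGroup Y] [InnerProductSpace ℝ Y]
  (Bd : (Eu n → ℝ) →ₗ[ℝ] (Y →L[ℝ] ℝ)) (ε : ℝ)

open RealInnerProductSpace
/-- component bounds -/
lemma comp_le_auxN (hε : 0 ≤ ε) (q : X × Y) :
    ‖Bd (q.1 : Eu n → ℝ)‖ ≤ auxN Ω ω X Y Bd ε q ∧
    L2 (q.1 : Eu n → ℝ) ω ≤ auxN Ω ω X Y Bd ε q ∧
    ε * L2 (q.1 : Eu n → ℝ) Ω ≤ auxN Ω ω X Y Bd ε q ∧
    ‖q.2‖ ≤ auxN Ω ω X Y Bd ε q := by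
  have l2ω := L2_nonneg (q.1 : Eu n → ℝ) ω
  have l2Ω := L2_nonneg (q.1 : Eu n → ℝ) Ω
  have key : ∀ x : ℝ, 0 ≤ x → x ^ 2 ≤ auxT Ω ω X Y Bd ε q.1 + ‖q.2‖ ^ 2 →
      x ≤ auxN Ω ω X Y Bd ε q := by
    intro x hx hle
    calc x = Real.sqrt (x ^ 2) := (Real.sqrt_sq hx).symm
      _ ≤ _ := Real.sqrt_le_sqrt hle
  have hT : auxT Ω ω X Y Bd ε q.1
      = ‖Bd (q.1 : Eu n → ℝ)‖ ^ 2 + L2 (q.1 : Eu n → ℝ) ω ^ 2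
        + (ε * L2 (q.1 : Eu n → ℝ) Ω) ^ 2 := by rw [auxT]; ring
  refine ⟨key _ (norm_nonneg _) ?_, key _ l2ω ?_, key _ (by positivity) ?_,
    key _ (norm_nonneg _) ?_⟩ <;> rw [hT] <;> nlinarith [sq_nonneg (ε * L2 (q.1 : Eu n → ℝ) Ω),
      sq_nonneg (L2 (q.1 : Eu n → ℝ) ω), sq_nonneg ‖Bd (q.1 : Eu n → ℝ)‖, sq_nonneg ‖q.2‖]

open RealInnerProductSpace in
lemma auxM_bound (hωΩ : ω ⊆ Ω) (hX2 : ∀ z ∈ X, MemLp z 2 (volume.restrict Ω)) (hε : 0 ≤ ε)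
    (p q : X × Y) :
    |auxM Ω ω X Y Bd ε p q| ≤ 5 * (auxN Ω ω X Y Bd ε p * auxN Ω ω X Y Bd ε q) := by
  have hle : volume.restrict ω ≤ volume.restrict Ω := Measure.restrict_mono hωΩ le_rfl
  have mΩp : MemLp (p.1 : Eu n → ℝ) 2 (volume.restrict Ω) := hX2 _ p.1.2
  have mΩq : MemLp (q.1 : Eu n → ℝ) 2 (volume.restrict Ω) := hX2 _ q.1.2
  have mωp : MemLp (p.1 : Eu n → ℝ) 2 (volume.restrict ω) := mΩp.mono_measure hle
  have mωq : MemLp (q.1 : Eu n → ℝ) 2 (volume.restrict ω) := mΩq.mono_measure hle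
  have csω := myCS mωp mωq
  have csΩ := myCS mΩp mΩq
  rw [← L2] at csω csΩ
  rw [← L2] at csω csΩ
  have h1 : |⟪p.2, q.2⟫| ≤ ‖p.2‖ * ‖q.2‖ := abs_real_inner_le_norm _ _
  have h2 : |Bd (p.1 : Eu n → ℝ) q.2| ≤ ‖Bd (p.1 : Eu n → ℝ)‖ * ‖q.2‖ :=
    (Bd (p.1 : Eu n → ℝ)).le_opNorm q.2
  have h3 : |Bd (q.1 : Eu n → ℝ) p.2| ≤ ‖Bd (q.1 : Eu n → ℝ)‖ * ‖p.2‖ :=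
    (Bd (q.1 : Eu n → ℝ)).le_opNorm p.2
  obtain ⟨P1, P2, P3, P4⟩ := comp_le_auxN Ω ω X Y Bd ε hε p
  obtain ⟨Q1, Q2, Q3, Q4⟩ := comp_le_auxN Ω ω X Y Bd ε hε q
  have Np := auxN_nonneg Ω ω X Y Bd ε p
  have Nq := auxN_nonneg Ω ω X Y Bd ε q
  have l2pω := L2_nonneg (p.1 : Eu n → ℝ) ω
  have l2qω := L2_nonneg (q.1 : Eu n → ℝ) ω
  have l2pΩ := L2_nonneg (p.1 : Eu n → ℝ) Ω
  have l2qΩ := L2_nonneg (q.1 : Eu n → ℝ) Ω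
  have e5 : ε ^ 2 * (L2 (p.1 : Eu n → ℝ) Ω * L2 (q.1 : Eu n → ℝ) Ω)
      = (ε * L2 (p.1 : Eu n → ℝ) Ω) * (ε * L2 (q.1 : Eu n → ℝ) Ω) := by ring
  have b1 : |⟪p.2, q.2⟫| ≤ auxN Ω ω X Y Bd ε p * auxN Ω ω X Y Bd ε q :=
    h1.trans (mul_le_mul P4 Q4 (norm_nonneg _) Np)
  have b2 : |Bd (p.1 : Eu n → ℝ) q.2| ≤ auxN Ω ω X Y Bd ε p * auxN Ω ω X Y Bd ε q :=
    h2.trans (mul_le_mul P1 Q4 (norm_nonneg _) Np)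
  have b3 : |Bd (q.1 : Eu n → ℝ) p.2| ≤ auxN Ω ω X Y Bd ε p * auxN Ω ω X Y Bd ε q := by
    refine h3.trans ?_
    calc ‖Bd (q.1 : Eu n → ℝ)‖ * ‖p.2‖ = ‖p.2‖ * ‖Bd (q.1 : Eu n → ℝ)‖ := mul_comm _ _
      _ ≤ _ := mul_le_mul P4 Q1 (norm_nonneg _) Np
  have b4 : |∫ x in ω, (p.1 : Eu n → ℝ) x * (q.1 : Eu n → ℝ) x|
      ≤ auxN Ω ω X Y Bd ε p * auxN Ω ω X Y Bd ε q :=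
    csω.trans (mul_le_mul P2 Q2 l2qω Np)
  have b5 : |ε ^ 2 * ∫ x in Ω, (p.1 : Eu n → ℝ) x * (q.1 : Eu n → ℝ) x|
      ≤ auxN Ω ω X Y Bd ε p * auxN Ω ω X Y Bd ε q := by
    rw [abs_mul, abs_of_nonneg (sq_nonneg ε)]
    calc ε ^ 2 * |∫ x in Ω, (p.1 : Eu n → ℝ) x * (q.1 : Eu n → ℝ) x|
        ≤ ε ^ 2 * (L2 (p.1 : Eu n → ℝ) Ω * L2 (q.1 : Eu n → ℝ) Ω) := by
          exact mul_le_mul_of_nonneg_left csΩ (sq_nonneg ε)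
      _ = (ε * L2 (p.1 : Eu n → ℝ) Ω) * (ε * L2 (q.1 : Eu n → ℝ) Ω) := e5
      _ ≤ _ := mul_le_mul P3 Q3 (by positivity) Np
  rw [auxM]
  set A := (⟪p.2, q.2⟫ : ℝ) with hA
  set B2 := Bd (p.1 : Eu n → ℝ) q.2 with hB2
  set B3 := Bd (q.1 : Eu n → ℝ) p.2 with hB3
  set D4 := ∫ x in ω, (p.1 : Eu n → ℝ) x * (q.1 : Eu n → ℝ) x with hD4
  set D5 := ε ^ 2 * ∫ x in Ω, (p.1 : Eu n → ℝ) x * (q.1 : Eu n → ℝ) x with hD5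
  have tri : |A + B2 + B3 - D4 - D5| ≤ |A| + |B2| + |B3| + |D4| + |D5| := by
    rw [abs_le]
    constructor <;>
      linarith [le_abs_self A, neg_abs_le A, le_abs_self B2, neg_abs_le B2,
        le_abs_self B3, neg_abs_le B3, le_abs_self D4, neg_abs_le D4,
        le_abs_self D5, neg_abs_le D5]
  linarith
end FactsB
section Facts2
variable {n : ℕ} (Ω ω : Set (Eu n)) (X : Submodule ℝ (Eu n → ℝ)) (Y : Type)
  [NormedAddCommGroup Y] [InnerProductSpace ℝ Y]
  (Bd : (Eu n → ℝ) →ₗ[ℝ] (Y →L[ℝ] ℝ)) (ε : ℝ)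

lemma auxS_neg_mem (p : X × Y) {r : ℝ} (hr : r ∈ auxS Ω ω X Y Bd ε p) :
    -r ∈ auxS Ω ω X Y Bd ε p := by
  obtain ⟨q, hq, rfl⟩ := hr
  exact ⟨-q, by rwa [auxN_neg], by rw [auxN_neg, auxM_neg_right, neg_div]⟩

lemma auxS_bddAbove (hωΩ : ω ⊆ Ω) (hX2 : ∀ z ∈ X, MemLp z 2 (volume.restrict Ω))
    (hε : 0 ≤ ε) (p : X × Y) :
    ∀ r ∈ auxS Ω ω X Y Bd ε p, r ≤ 5 * auxN Ω ω X Y Bd ε p := by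
  rintro r ⟨q, hq, rfl⟩
  have hNq : 0 < auxN Ω ω X Y Bd ε q :=
    lt_of_le_of_ne (auxN_nonneg Ω ω X Y Bd ε q) (Ne.symm hq)
  have habs := auxM_bound Ω ω X Y Bd ε hωΩ hX2 hε p q
  calc auxM Ω ω X Y Bd ε p q / auxN Ω ω X Y Bd ε q
      ≤ |auxM Ω ω X Y Bd ε p q / auxN Ω ω X Y Bd ε q| := le_abs_self _
    _ = |auxM Ω ω X Y Bd ε p q| / auxN Ω ω X Y Bd ε q := by
        rw [abs_div, abs_of_pos hNq]
    _ ≤ 5 * (auxN Ω ω X Y Bd ε p * auxN Ω ω X Y Bd ε q) / auxN Ω ω X Y Bd ε q := by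
        gcongr
    _ = 5 * auxN Ω ω X Y Bd ε p := by
        rw [mul_div_assoc, mul_div_assoc, div_self (ne_of_gt hNq), mul_one]

lemma sSup_auxS_nonneg (hωΩ : ω ⊆ Ω) (hX2 : ∀ z ∈ X, MemLp z 2 (volume.restrict Ω))
    (hε : 0 ≤ ε) (p : X × Y) : 0 ≤ sSup (auxS Ω ω X Y Bd ε p) := by
  rcases Set.eq_empty_or_nonempty (auxS Ω ω X Y Bd ε p) with he | ⟨r, hr⟩
  · rw [he, Real.sSup_empty]
  · have hbdd : BddAbove (auxS Ω ω X Y Bd ε p) :=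
      ⟨5 * auxN Ω ω X Y Bd ε p, auxS_bddAbove Ω ω X Y Bd ε hωΩ hX2 hε p⟩
    have h1 := le_csSup hbdd hr
    have h2 := le_csSup hbdd (auxS_neg_mem Ω ω X Y Bd ε p hr)
    linarith

lemma auxN_le (hε : 0 ≤ ε) (p : X × Y) :
    auxN Ω ω X Y Bd ε p ≤ Real.sqrt (auxT Ω ω X Y Bd ε p.1) + ‖p.2‖ := by
  have hT0 : 0 ≤ auxT Ω ω X Y Bd ε p.1 := by
    rw [auxT]
    have := L2_nonneg (p.1 : Eu n → ℝ) ω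
    have := L2_nonneg (p.1 : Eu n → ℝ) Ω
    positivity
  have hs := Real.sq_sqrt hT0
  have h0 : (0:ℝ) ≤ Real.sqrt (auxT Ω ω X Y Bd ε p.1) := Real.sqrt_nonneg _
  calc auxN Ω ω X Y Bd ε p
      ≤ Real.sqrt ((Real.sqrt (auxT Ω ω X Y Bd ε p.1) + ‖p.2‖) ^ 2) := by
        rw [auxN]; apply Real.sqrt_le_sqrt
        nlinarith [mul_nonneg h0 (norm_nonneg p.2)]
    _ = _ := Real.sqrt_sq (by positivity)

/-- upper bound -/
lemma aux_upper (hωΩ : ω ⊆ Ω) (hX2 : ∀ z ∈ X, MemLp z 2 (volume.restrict Ω))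
    (hε : 0 ≤ ε) (p : X × Y) :
    sSup (auxS Ω ω X Y Bd ε p)
      ≤ 5 * (Real.sqrt (auxT Ω ω X Y Bd ε p.1) + ‖p.2‖) := by
  apply Real.sSup_le
  · intro r hr
    calc r ≤ 5 * auxN Ω ω X Y Bd ε p := auxS_bddAbove Ω ω X Y Bd ε hωΩ hX2 hε p r hr
      _ ≤ _ := by
        have := auxN_le Ω ω X Y Bd ε hε p
        linarith
  · positivity

/-- the element `(0, w)` with `w` the Riesz representer of `Bd p.1` -/
lemma lower_h2 [FiniteDimensional ℝ Y] (hωΩ : ω ⊆ Ω)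
    (hX2 : ∀ z ∈ X, MemLp z 2 (volume.restrict Ω)) (hε : 0 ≤ ε) (p : X × Y) :
    ‖Bd (p.1 : Eu n → ℝ)‖ - ‖p.2‖ ≤ sSup (auxS Ω ω X Y Bd ε p) := by
  have hbdd : BddAbove (auxS Ω ω X Y Bd ε p) :=
    ⟨5 * auxN Ω ω X Y Bd ε p, auxS_bddAbove Ω ω X Y Bd ε hωΩ hX2 hε p⟩
  rcases eq_or_ne ‖Bd (p.1 : Eu n → ℝ)‖ 0 with h0 | h0
  · rw [h0]
    have := sSup_auxS_nonneg Ω ω X Y Bd ε hωΩ hX2 hε p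
    linarith [norm_nonneg p.2]
  · set a := ‖Bd (p.1 : Eu n → ℝ)‖ with ha
    have hapos : 0 < a := lt_of_le_of_ne (norm_nonneg _) (Ne.symm h0)
    set w := (InnerProductSpace.toDual ℝ Y).symm (Bd (p.1 : Eu n → ℝ)) with hw
    have hwinner : ∀ y : Y, (inner ℝ w y : ℝ) = Bd (p.1 : Eu n → ℝ) y := fun y =>
      InnerProductSpace.toDual_symm_apply
    have hwnorm : ‖w‖ = a := (InnerProductSpace.toDual ℝ Y).symm.norm_map _
    have hq0 : (((0 : X)) : Eu n → ℝ) = 0 := rfl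
    have hNq : auxN Ω ω X Y Bd ε ((0 : X), w) = a := by
      rw [auxN]
      have : auxT Ω ω X Y Bd ε ((0 : X), w).1 = 0 := auxT_zero Ω ω X Y Bd ε
      rw [this, zero_add, Real.sqrt_sq (norm_nonneg _), hwnorm]
    have hMval : auxM Ω ω X Y Bd ε p ((0 : X), w) = (inner ℝ p.2 w : ℝ) + a ^ 2 := by
      rw [auxM]
      simp only [hq0, map_zero, ContinuousLinearMap.zero_apply, Pi.zero_apply, mul_zero,
        integral_zero]
      have : Bd (p.1 : Eu n → ℝ) w = a ^ 2 := by
        rw [← hwinner w, real_inner_self_eq_norm_sq, hwnorm]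
      rw [this]; ring
    have hmem : ((inner ℝ p.2 w : ℝ) + a ^ 2) / a ∈ auxS Ω ω X Y Bd ε p :=
      ⟨((0 : X), w), by rw [hNq]; exact ne_of_gt hapos, by rw [hNq, hMval]⟩
    have hs := le_csSup hbdd hmem
    have hinner : -(‖p.2‖ * a) ≤ (inner ℝ p.2 w : ℝ) := by
      have := abs_real_inner_le_norm p.2 w
      rw [hwnorm] at this
      cases' abs_le.mp this with h _
      linarith
    have : a - ‖p.2‖ ≤ ((inner ℝ p.2 w : ℝ) + a ^ 2) / a := by
      rw [le_div_iff₀ hapos]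
      nlinarith
    linarith
end Facts2
section Facts3
variable {n : ℕ} (Ω ω : Set (Eu n)) (X : Submodule ℝ (Eu n → ℝ)) (Y : Type)
  [NormedAddCommGroup Y] [InnerProductSpace ℝ Y]
  (Bd : (Eu n → ℝ) →ₗ[ℝ] (Y →L[ℝ] ℝ)) (ε : ℝ)

/-- lower bound -/
lemma aux_lower [FiniteDimensional ℝ Y] (hωΩ : ω ⊆ Ω)
    (hX2 : ∀ z ∈ X, MemLp z 2 (volume.restrict Ω)) (hε : 0 ≤ ε) (p : X × Y) :
    (1 / 25) * (Real.sqrt (auxT Ω ω X Y Bd ε p.1) + ‖p.2‖)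
      ≤ sSup (auxS Ω ω X Y Bd ε p) := by
  have hbdd : BddAbove (auxS Ω ω X Y Bd ε p) :=
    ⟨5 * auxN Ω ω X Y Bd ε p, auxS_bddAbove Ω ω X Y Bd ε hωΩ hX2 hε p⟩
  have hl2ω := L2_nonneg (p.1 : Eu n → ℝ) ω
  have hl2Ω := L2_nonneg (p.1 : Eu n → ℝ) Ω
  have hTeq : auxT Ω ω X Y Bd ε p.1
      = ‖Bd (p.1 : Eu n → ℝ)‖ ^ 2 + L2 (p.1 : Eu n → ℝ) ω ^ 2
        + (ε * L2 (p.1 : Eu n → ℝ) Ω) ^ 2 := by rw [auxT]; ring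
  have hNeq : auxN Ω ω X Y Bd ε p
      = Real.sqrt (‖Bd (p.1 : Eu n → ℝ)‖ ^ 2 + L2 (p.1 : Eu n → ℝ) ω ^ 2
        + (ε * L2 (p.1 : Eu n → ℝ) Ω) ^ 2 + ‖p.2‖ ^ 2) := by
    rw [auxN, hTeq]
  rw [hTeq]
  apply arith_lower _ _ _ _ _ (norm_nonneg _) hl2ω (by positivity) (norm_nonneg _)
    (sSup_auxS_nonneg Ω ω X Y Bd ε hωΩ hX2 hε p)
  · -- h1 : element (-p.1, p.2)
    intro hN
    rw [← hNeq] at hN ⊢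
    have hmem : (‖p.2‖ ^ 2 + L2 (p.1 : Eu n → ℝ) ω ^ 2 + (ε * L2 (p.1 : Eu n → ℝ) Ω) ^ 2)
        / auxN Ω ω X Y Bd ε p ∈ auxS Ω ω X Y Bd ε p := by
      refine ⟨(-p.1, p.2), ?_, ?_⟩
      · have : auxN Ω ω X Y Bd ε (-p.1, p.2) = auxN Ω ω X Y Bd ε p := by
          rw [auxN, auxN]
          have : auxT Ω ω X Y Bd ε (-p.1, p.2).1 = auxT Ω ω X Y Bd ε p.1 :=
            auxT_neg Ω ω X Y Bd ε p.1
          rw [this]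
        rwa [this]
      · have hN' : auxN Ω ω X Y Bd ε (-p.1, p.2) = auxN Ω ω X Y Bd ε p := by
          rw [auxN, auxN]
          have : auxT Ω ω X Y Bd ε (-p.1, p.2).1 = auxT Ω ω X Y Bd ε p.1 :=
            auxT_neg Ω ω X Y Bd ε p.1
          rw [this]
        rw [hN', auxM_E1]
        congr 1
        ring
    exact le_csSup hbdd hmem
  · exact lower_h2 Ω ω X Y Bd ε hωΩ hX2 hε p

lemma aux_inj [FiniteDimensional ℝ Y]
    (hnorm : ∀ z ∈ X, Bd z = 0 → L2 z ω = 0 → ε * L2 z Ω = 0 → z = 0)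
    (pq : X × Y) (hp : ∀ q : X × Y, auxM Ω ω X Y Bd ε pq q = 0) : pq = 0 := by
  have h1 := hp (-pq.1, pq.2)
  rw [auxM_E1] at h1
  have hl2ω := L2_nonneg (pq.1 : Eu n → ℝ) ω
  have hl2Ω := L2_nonneg (pq.1 : Eu n → ℝ) Ω
  have hv : ‖pq.2‖ = 0 := by nlinarith [sq_nonneg (ε * L2 (pq.1 : Eu n → ℝ) Ω)]
  have hL2ω : L2 (pq.1 : Eu n → ℝ) ω = 0 := by
    nlinarith [sq_nonneg (ε * L2 (pq.1 : Eu n → ℝ) Ω), norm_nonneg pq.2]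
  have hεL2 : ε * L2 (pq.1 : Eu n → ℝ) Ω = 0 := by
    have h2 : (ε * L2 (pq.1 : Eu n → ℝ) Ω) ^ 2 = 0 := by nlinarith [norm_nonneg pq.2]
    exact (pow_eq_zero_iff two_ne_zero).mp h2
  have hv2 : pq.2 = 0 := norm_eq_zero.mp hv
  set w := (InnerProductSpace.toDual ℝ Y).symm (Bd (pq.1 : Eu n → ℝ)) with hwdef
  have h2 := hp ((0 : X), w)
  have hq0 : (((0 : X)) : Eu n → ℝ) = 0 := rfl
  rw [auxM] at h2
  simp only [hq0, map_zero, ContinuousLinearMap.zero_apply, Pi.zero_apply, mul_zero,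
    integral_zero, hv2, inner_zero_left, add_zero, zero_add, mul_zero, sub_zero] at h2
  have hBw : Bd (pq.1 : Eu n → ℝ) w = ‖Bd (pq.1 : Eu n → ℝ)‖ ^ 2 := by
    rw [← InnerProductSpace.toDual_symm_apply (y := Bd (pq.1 : Eu n → ℝ)) (x := w),
      real_inner_self_eq_norm_sq, (InnerProductSpace.toDual ℝ Y).symm.norm_map]
  rw [hBw] at h2
  have hB0 : Bd (pq.1 : Eu n → ℝ) = 0 := by
    have := (pow_eq_zero_iff two_ne_zero).mp h2
    exact norm_eq_zero.mp this
  have hz : (pq.1 : Eu n → ℝ) = 0 := hnorm _ pq.1.2 hB0 hL2ω hεL2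
  have hp1 : pq.1 = 0 := Subtype.ext hz
  exact Prod.ext hp1 hv2

lemma aux_surj [FiniteDimensional ℝ Y] (hωΩ : ω ⊆ Ω)
    (hX2 : ∀ z ∈ X, MemLp z 2 (volume.restrict Ω)) (hε : 0 ≤ ε)
    (hXfin : FiniteDimensional ℝ X)
    (hnorm : ∀ z ∈ X, Bd z = 0 → L2 z ω = 0 → ε * L2 z Ω = 0 → z = 0) :
    ∀ φ : (X × Y) →ₗ[ℝ] ℝ, ∃ p : X × Y, ∀ q : X × Y, auxM Ω ω X Y Bd ε p q = φ q := by
  haveI := hXfin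
  have hle : volume.restrict ω ≤ volume.restrict Ω := Measure.restrict_mono hωΩ le_rfl
  have memω : ∀ z : X, MemLp (z : Eu n → ℝ) 2 (volume.restrict ω) := fun z =>
    (hX2 _ z.2).mono_measure hle
  have memΩ : ∀ z : X, MemLp (z : Eu n → ℝ) 2 (volume.restrict Ω) := fun z => hX2 _ z.2
  -- right additivity
  have hadd : ∀ p q q' : X × Y,
      auxM Ω ω X Y Bd ε p (q + q') = auxM Ω ω X Y Bd ε p q + auxM Ω ω X Y Bd ε p q' := by
    intro p q q'
    have hc : (((q + q').1 : X) : Eu n → ℝ) = (q.1 : Eu n → ℝ) + (q'.1 : Eu n → ℝ) := rfl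
    have hintS : ∀ S : Set (Eu n), MemLp (p.1 : Eu n → ℝ) 2 (volume.restrict S) →
        MemLp (q.1 : Eu n → ℝ) 2 (volume.restrict S) →
        MemLp (q'.1 : Eu n → ℝ) 2 (volume.restrict S) →
        (∫ x in S, (p.1 : Eu n → ℝ) x * ((q.1 : Eu n → ℝ) x + (q'.1 : Eu n → ℝ) x))
          = (∫ x in S, (p.1 : Eu n → ℝ) x * (q.1 : Eu n → ℝ) x)
            + ∫ x in S, (p.1 : Eu n → ℝ) x * (q'.1 : Eu n → ℝ) x := by
      intro S h1 h2 h3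
      simp_rw [mul_add]
      exact integral_add (myMulInt h1 h2) (myMulInt h1 h3)
    rw [auxM, auxM, auxM, hc]
    simp only [Prod.fst_add, Prod.snd_add, inner_add_right, map_add,
      ContinuousLinearMap.add_apply, Pi.add_apply]
    rw [hintS ω (memω p.1) (memω q.1) (memω q'.1),
      hintS Ω (memΩ p.1) (memΩ q.1) (memΩ q'.1)]
    ring
  have hsmul : ∀ (c : ℝ) (p q : X × Y),
      auxM Ω ω X Y Bd ε p (c • q) = c * auxM Ω ω X Y Bd ε p q := by
    intro c p q
    have hc : (((c • q).1 : X) : Eu n → ℝ) = c • (q.1 : Eu n → ℝ) := rfl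
    have e1 : Bd (c • (q.1 : Eu n → ℝ)) = c • Bd (q.1 : Eu n → ℝ) := Bd.map_smul c _
    have e2 : Bd (p.1 : Eu n → ℝ) (c • q.2) = c * Bd (p.1 : Eu n → ℝ) q.2 := by
      rw [ContinuousLinearMap.map_smul, smul_eq_mul]
    rw [auxM, auxM, hc]
    simp only [Prod.smul_fst, Prod.smul_snd, real_inner_smul_right,
      Pi.smul_apply, smul_eq_mul, e2, e1, ContinuousLinearMap.smul_apply]
    have hS : ∀ S : Set (Eu n),
        (∫ x in S, (p.1 : Eu n → ℝ) x * (c * (q.1 : Eu n → ℝ) x))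
          = c * ∫ x in S, (p.1 : Eu n → ℝ) x * (q.1 : Eu n → ℝ) x := by
      intro S
      simp_rw [mul_left_comm]
      exact integral_const_mul c _
    rw [hS ω, hS Ω]
    ring
  -- the linear operator
  set L : (X × Y) →ₗ[ℝ] (X × Y) →ₗ[ℝ] ℝ := LinearMap.mk₂ ℝ (auxM Ω ω X Y Bd ε)
    (fun p p' q => by
      rw [auxM_comm Ω ω X Y Bd ε _ q, hadd q p p', auxM_comm Ω ω X Y Bd ε q p,
        auxM_comm Ω ω X Y Bd ε q p'])
    (fun c p q => by
      rw [auxM_comm Ω ω X Y Bd ε _ q, hsmul c q p, auxM_comm Ω ω X Y Bd ε q p,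
        smul_eq_mul])
    (fun p q q' => hadd p q q')
    (fun c p q => by rw [hsmul c p q, smul_eq_mul]) with hL
  have hinj : Function.Injective L := by
    rw [← LinearMap.ker_eq_bot, LinearMap.ker_eq_bot']
    intro pq hker
    refine aux_inj Ω ω X Y Bd ε hnorm pq fun q => ?_
    have h := LinearMap.congr_fun hker q
    rwa [hL, LinearMap.mk₂_apply, LinearMap.zero_apply] at h
  have hdim : Module.finrank ℝ (X × Y) = Module.finrank ℝ ((X × Y) →ₗ[ℝ] ℝ) :=
    (Subspace.dual_finrank_eq (K := ℝ) (V := X × Y)).symm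
  have hsurj : Function.Surjective L :=
    (LinearMap.injective_iff_surjective_of_finrank_eq_finrank hdim).mp hinj
  intro φ
  obtain ⟨p, hp2⟩ := hsurj φ
  refine ⟨p, fun q => ?_⟩
  have h := LinearMap.congr_fun hp2 q
  rwa [hL, LinearMap.mk₂_apply] at h
end Facts3


open RealInnerProductSpace in
/-- **Well-posedness of the discrete mixed (saddle point) system** (Lemma 5.1):
if `|||·|||_{ε,δ}` is a norm on the finite-dimensional trial space `X`, then the
saddle-point operator `M^δ` is invertible and
`|||u|||_{ε,δ} + ‖v‖_{Y^δ} ≂ ‖M^δ(u,v)‖_{((X,|||·|||_{ε,δ}) × Y^δ)'}`,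
with equivalence constants independent of `δ`, `ε`, `X^δ`, `Y^δ` and `B^δ`. -/
theorem mixed_system_wellposed :
    ∃ c > (0 : ℝ), ∃ C > (0 : ℝ),
      ∀ {n : ℕ} (Ω ω : Set (Eu n)), IsBddDomain Ω → IsOpen ω → ω.Nonempty → ω ⊆ Ω →
      ∀ (X : Submodule ℝ (Eu n → ℝ)) (Y : Type)
        [NormedAddCommGroup Y] [InnerProductSpace ℝ Y] [FiniteDimensional ℝ Y]
        (Bd : (Eu n → ℝ) →ₗ[ℝ] (Y →L[ℝ] ℝ)) (ε : ℝ),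
        FiniteDimensional ℝ X →
        (∀ z ∈ X, MemLp z 2 (volume.restrict Ω)) →
        -- `B^δ ∈ 𝓛(L₂(Ω), (Y^δ)')`
        (∃ M : ℝ, ∀ z : Eu n → ℝ, ‖Bd z‖ ≤ M * L2 z Ω) →
        0 ≤ ε → ε ≤ 1 →
        -- `|||·|||_{ε,δ}` is a norm on `X`
        (∀ z ∈ X, Bd z = 0 → L2 z ω = 0 → ε * L2 z Ω = 0 → z = 0) →
        -- `M^δ` is invertible (here: surjective onto the dual of `X × Y`; injectivity
        -- follows from the lower bound below)
        ((∀ φ : (X × Y) →ₗ[ℝ] ℝ, ∃ p : X × Y, ∀ q : X × Y,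
            (⟪p.2, q.2⟫ + Bd p.1 q.2 + Bd q.1 p.2
              - (∫ x in ω, (p.1 : Eu n → ℝ) x * (q.1 : Eu n → ℝ) x)
              - ε ^ 2 * ∫ x in Ω, (p.1 : Eu n → ℝ) x * (q.1 : Eu n → ℝ) x) = φ q) ∧
        -- two-sided bound `|||u|||_{ε,δ} + ‖v‖ ≂ ‖M^δ(u,v)‖`
          (∀ p : X × Y,
            c * (Real.sqrt (‖Bd p.1‖ ^ 2 + L2 (p.1 : Eu n → ℝ) ω ^ 2
                  + ε ^ 2 * L2 (p.1 : Eu n → ℝ) Ω ^ 2) + ‖p.2‖)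
              ≤ sSup {r : ℝ | ∃ q : X × Y,
                  Real.sqrt ((‖Bd q.1‖ ^ 2 + L2 (q.1 : Eu n → ℝ) ω ^ 2
                    + ε ^ 2 * L2 (q.1 : Eu n → ℝ) Ω ^ 2) + ‖q.2‖ ^ 2) ≠ 0 ∧
                  r = (⟪p.2, q.2⟫ + Bd p.1 q.2 + Bd q.1 p.2
                      - (∫ x in ω, (p.1 : Eu n → ℝ) x * (q.1 : Eu n → ℝ) x)
                      - ε ^ 2 * ∫ x in Ω, (p.1 : Eu n → ℝ) x * (q.1 : Eu n → ℝ) x)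
                    / Real.sqrt ((‖Bd q.1‖ ^ 2 + L2 (q.1 : Eu n → ℝ) ω ^ 2
                    + ε ^ 2 * L2 (q.1 : Eu n → ℝ) Ω ^ 2) + ‖q.2‖ ^ 2)} ∧
            sSup {r : ℝ | ∃ q : X × Y,
                  Real.sqrt ((‖Bd q.1‖ ^ 2 + L2 (q.1 : Eu n → ℝ) ω ^ 2
                    + ε ^ 2 * L2 (q.1 : Eu n → ℝ) Ω ^ 2) + ‖q.2‖ ^ 2) ≠ 0 ∧
                  r = (⟪p.2, q.2⟫ + Bd p.1 q.2 + Bd q.1 p.2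
                      - (∫ x in ω, (p.1 : Eu n → ℝ) x * (q.1 : Eu n → ℝ) x)
                      - ε ^ 2 * ∫ x in Ω, (p.1 : Eu n → ℝ) x * (q.1 : Eu n → ℝ) x)
                    / Real.sqrt ((‖Bd q.1‖ ^ 2 + L2 (q.1 : Eu n → ℝ) ω ^ 2
                    + ε ^ 2 * L2 (q.1 : Eu n → ℝ) Ω ^ 2) + ‖q.2‖ ^ 2)}
              ≤ C * (Real.sqrt (‖Bd p.1‖ ^ 2 + L2 (p.1 : Eu n → ℝ) ω ^ 2
                  + ε ^ 2 * L2 (p.1 : Eu n → ℝ) Ω ^ 2) + ‖p.2‖))) := by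
  refine ⟨1/25, by norm_num, 5, by norm_num, ?_⟩
  intro n Ω ω hΩ hωopen hωne hωΩ X Y _ _ _ Bd ε hXfin hX2 hBbd hε0 hε1 hnorm
  refine ⟨aux_surj Ω ω X Y Bd ε hωΩ hX2 hε0 hXfin hnorm, fun p =>
    ⟨aux_lower Ω ω X Y Bd ε hωΩ hX2 hε0 p, aux_upper Ω ω X Y Bd ε hωΩ hX2 hε0 p⟩⟩

end
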